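/- For any acyclic b-matching preference instance and any initial configuration C, there exists a sequence of at most B/2 active initiatives leading from C to the unique stable configuration of the instance, where B = Σ_{p∈P} b(p) is the sum of all quotas. -/

import Mathlib

/-!
A formalization of b-matching preference instances (peers, acceptance graph,
quotas, preference lists given by ranks), configurations, blocking pairs,
stability, active initiatives, loving pairs, and acyclicity.
-/

open Finset

/-- A b-matching preference instance on a finite set `P` of peers:
an acceptance graph `G`, quotas `b`, and for each peer `p` a rank function
(`rank p q` is the position of `q` in `p`'s preference list, smaller is better),
injective on the neighbors of `p` (strict preferences). -/
structure PrefInstance (P : Type*) [Fintype P] [DecidableEq P] where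
  G : SimpleGraph P
  b : P → ℕ
  rank : P → P → ℕ
  rank_injOn : ∀ p : P, Set.InjOn (rank p) {q | G.Adj p q}

namespace PrefInstance

variable {P : Type*} [Fintype P] [DecidableEq P] (I : PrefInstance P)

/-- `p` prefers `q` to `r` (both neighbors of `p`, `q` ranked better). -/
def Prefers (p q r : P) : Prop :=
  I.G.Adj p q ∧ I.G.Adj p r ∧ I.rank p q < I.rank p r

/-- The instance is acyclic: there is no preference cycle, i.e. no `k ≥ 3`
distinct peers `p_1, …, p_k` (indices modulo `k`) such that each `p_i`
prefers `p_{i+1}` to `p_{i-1}`. -/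
def Acyclic : Prop :=
  ¬ ∃ (k : ℕ) (f : ZMod k → P), 3 ≤ k ∧ Function.Injective f ∧
      ∀ i : ZMod k, I.Prefers (f i) (f (i + 1)) (f (i - 1))

/-- The mates of `p` in a set `C` of edges. -/
def mates (C : Finset (Sym2 P)) (p : P) : Finset P :=
  Finset.univ.filter fun q => s(p, q) ∈ C

/-- `C` is a configuration: a set of edges of the acceptance graph in which every
peer `p` has at most `b p` mates. -/
def IsConfig (C : Finset (Sym2 P)) : Prop :=
  (∀ e ∈ C, e ∈ I.G.edgeSet) ∧ ∀ p : P, (mates C p).card ≤ I.b p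

/-- `p` is under-mated in `C`: it has fewer than `b p` mates. -/
def UnderMated (C : Finset (Sym2 P)) (p : P) : Prop :=
  (mates C p).card < I.b p

/-- `p` is willing to pair with `q`: it is under-mated, or it prefers `q`
to its worst mate in `C`. -/
def Willing (C : Finset (Sym2 P)) (p q : P) : Prop :=
  I.UnderMated C p ∨ ∃ w ∈ mates C p, I.rank p q < I.rank p w

/-- `{p, q}` is a blocking pair for `C`: an edge of the acceptance graph not in
`C` such that each endpoint is under-mated or prefers the other to its worst mate. -/
def BlockingPair (C : Finset (Sym2 P)) (p q : P) : Prop :=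
  I.G.Adj p q ∧ s(p, q) ∉ C ∧ I.Willing C p q ∧ I.Willing C q p

/-- A configuration is stable if it admits no blocking pair. -/
def IsStable (C : Finset (Sym2 P)) : Prop :=
  I.IsConfig C ∧ ∀ p q : P, ¬ I.BlockingPair C p q

/-- The edges to be dropped at `p` when `p` gets a new mate: none if `p` is
under-mated, otherwise the edge joining `p` to its worst mate in `C`. -/
def dropEdges (C : Finset (Sym2 P)) (p : P) : Finset (Sym2 P) :=
  if (mates C p).card < I.b p then ∅
  else ((mates C p).filter fun w => ∀ r ∈ mates C p, I.rank p r ≤ I.rank p w).image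
      fun w => s(p, w)

/-- The configuration produced by resolving the blocking pair `{p, q}` of `C`:
add the edge `{p, q}` and, for each of `p` and `q` already at full quota,
remove the edge joining it to its worst mate. -/
def resolve (C : Finset (Sym2 P)) (p q : P) : Finset (Sym2 P) :=
  insert s(p, q) (C \ (I.dropEdges C p ∪ I.dropEdges C q))

/-- `C'` is obtained from `C` by an active initiative. -/
def ActiveStep (C C' : Finset (Sym2 P)) : Prop :=
  ∃ p q : P, I.BlockingPair C p q ∧ C' = I.resolve C p q

/-- `{p, q}` is a loving pair: an edge of the acceptance graph whose endpoints
rank each other first. -/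
def LovingPair (p q : P) : Prop :=
  I.G.Adj p q ∧ (∀ r : P, I.G.Adj p r → I.rank p q ≤ I.rank p r) ∧
    ∀ r : P, I.G.Adj q r → I.rank q p ≤ I.rank q r

open scoped Classical in
/-- The best-mate initiative of peer `p` at configuration `C`: resolve the
blocking pair `{p, q}` where `q` is the peer `p` prefers most among all peers
forming a blocking pair with `p`; if `p` belongs to no blocking pair, `C` is
left unchanged. -/
noncomputable def bestMateInit (C : Finset (Sym2 P)) (p : P) : Finset (Sym2 P) :=
  if h : ∃ q : P, I.BlockingPair C p q ∧
      ∀ r : P, I.BlockingPair C p r → I.rank p q ≤ I.rank p r then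
    I.resolve C p h.choose
  else C

section Basics

variable {P : Type*} [Fintype P] [DecidableEq P] (I : PrefInstance P)

lemma mem_mates {C : Finset (Sym2 P)} {p q : P} : q ∈ mates C p ↔ s(p, q) ∈ C := by
  simp [mates]

lemma adj_of_mem_mates {C : Finset (Sym2 P)} (hC : I.IsConfig C) {p q : P}
    (h : q ∈ mates C p) : I.G.Adj p q := by
  have := hC.1 _ (mem_mates.mp h)
  rwa [SimpleGraph.mem_edgeSet] at this

lemma mates_sdiff (C U : Finset (Sym2 P)) (z : P) :
    mates (C \ U) z = (mates C z).filter (fun w => s(z, w) ∉ U) := by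
  ext w; simp [mates, and_assoc]

lemma mates_insert_self (C : Finset (Sym2 P)) {x y : P} (hxy : x ≠ y) :
    mates (insert s(x, y) C) x = insert y (mates C x) := by
  ext w
  simp only [mem_mates, Finset.mem_insert, Sym2.eq_iff, mates, Finset.mem_filter,
    Finset.mem_univ, true_and]
  tauto

lemma mates_insert_other (C : Finset (Sym2 P)) {x y z : P} (hx : z ≠ x) (hy : z ≠ y) :
    mates (insert s(x, y) C) z = mates C z := by
  ext w
  simp only [mates, Finset.mem_filter, Finset.mem_univ, true_and, Finset.mem_insert, Sym2.eq_iff]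
  tauto

lemma mates_erase_self (C : Finset (Sym2 P)) {x y : P} (hxy : x ≠ y) :
    mates (C.erase s(x, y)) x = (mates C x).erase y := by
  ext w
  simp only [mates, Finset.mem_filter, Finset.mem_univ, true_and, Finset.mem_erase, Ne,
    Sym2.eq_iff]
  tauto

lemma mates_erase_other (C : Finset (Sym2 P)) {x y z : P} (hx : z ≠ x) (hy : z ≠ y) :
    mates (C.erase s(x, y)) z = mates C z := by
  ext w
  simp only [mates, Finset.mem_filter, Finset.mem_univ, true_and, Finset.mem_erase, Ne,
    Sym2.eq_iff]
  tauto

lemma mem_dropEdges {C : Finset (Sym2 P)} {p : P} {e : Sym2 P} (h : e ∈ I.dropEdges C p) :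
    ∃ w ∈ mates C p, e = s(p, w) ∧ ∀ r ∈ mates C p, I.rank p r ≤ I.rank p w := by
  unfold dropEdges at h
  split at h
  · simp at h
  · simp only [Finset.mem_image, Finset.mem_filter] at h
    obtain ⟨w, ⟨hw, hmax⟩, rfl⟩ := h
    exact ⟨w, hw, rfl, hmax⟩

end Basics
section Resolve

variable {P : Type*} [Fintype P] [DecidableEq P] (I : PrefInstance P)

lemma card_mates_resolve_aux {C U : Finset (Sym2 P)} (hC : I.IsConfig C) {x y : P}
    (hxy : x ≠ y) (hW : I.Willing C x y) (hU : I.dropEdges C x ⊆ U) :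
    (mates (insert s(x, y) (C \ U)) x).card ≤ I.b x := by
  rw [mates_insert_self _ hxy]
  by_cases hum : (mates C x).card < I.b x
  · have h1 : mates (C \ U) x ⊆ mates C x := by
      rw [mates_sdiff]; exact Finset.filter_subset _ _
    calc (insert y (mates (C \ U) x)).card ≤ (mates (C \ U) x).card + 1 :=
          Finset.card_insert_le _ _
      _ ≤ (mates C x).card + 1 := by
          exact Nat.add_le_add_right (Finset.card_le_card h1) 1
      _ ≤ I.b x := hum
  · obtain ⟨w, hw, -⟩ := hW.resolve_left hum
    have hne : (mates C x).Nonempty := ⟨w, hw⟩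
    obtain ⟨w0, hw0, hmax⟩ := Finset.exists_max_image (mates C x) (I.rank x) hne
    have hdrop : s(x, w0) ∈ I.dropEdges C x := by
      unfold dropEdges
      rw [if_neg hum]
      exact Finset.mem_image.mpr ⟨w0, Finset.mem_filter.mpr ⟨hw0, hmax⟩, rfl⟩
    have h1 : mates (C \ U) x ⊆ (mates C x).erase w0 := by
      intro v hv
      rw [mates_sdiff, Finset.mem_filter] at hv
      refine Finset.mem_erase.mpr ⟨fun hvw => ?_, hv.1⟩
      exact hv.2 (hvw ▸ hU hdrop)
    have hcb : (mates C x).card ≤ I.b x := hC.2 x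
    have hc1 : 1 ≤ (mates C x).card := Finset.card_pos.mpr hne
    calc (insert y (mates (C \ U) x)).card ≤ (mates (C \ U) x).card + 1 :=
          Finset.card_insert_le _ _
      _ ≤ ((mates C x).erase w0).card + 1 := Nat.add_le_add_right (Finset.card_le_card h1) 1
      _ = ((mates C x).card - 1) + 1 := by rw [Finset.card_erase_of_mem hw0]
      _ ≤ I.b x := by omega

lemma isConfig_resolve {C : Finset (Sym2 P)} {x y : P} (hC : I.IsConfig C)
    (hB : I.BlockingPair C x y) : I.IsConfig (I.resolve C x y) := by
  obtain ⟨hadj, hnot, hWx, hWy⟩ := hB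
  have hxy : x ≠ y := hadj.ne
  constructor
  · intro e he
    rcases Finset.mem_insert.mp he with rfl | he
    · exact hadj
    · exact hC.1 e (Finset.mem_sdiff.mp he).1
  · intro z
    unfold resolve
    by_cases hzx : z = x
    · subst hzx
      exact I.card_mates_resolve_aux hC hxy hWx Finset.subset_union_left
    by_cases hzy : z = y
    · subst hzy
      rw [Sym2.eq_swap]
      exact I.card_mates_resolve_aux hC (Ne.symm hxy) hWy Finset.subset_union_right
    · rw [mates_insert_other _ hzx hzy, mates_sdiff]
      calc ((mates C z).filter _).card ≤ (mates C z).card := Finset.card_filter_le _ _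
        _ ≤ I.b z := hC.2 z

lemma isConfig_of_activeStep {C C' : Finset (Sym2 P)} (hC : I.IsConfig C)
    (h : I.ActiveStep C C') : I.IsConfig C' := by
  obtain ⟨p, q, hB, rfl⟩ := h
  exact I.isConfig_resolve hC hB

end Resolve
section Loving

variable {P : Type*} [Fintype P] [DecidableEq P] (I : PrefInstance P)

open Classical in
lemma exists_lovingPair (hI : I.Acyclic) {x0 y0 : P} (h0 : I.G.Adj x0 y0) :
    ∃ p q : P, I.LovingPair p q := by
  -- favorite neighbor function
  have hfav : ∀ p : P, (∃ r, I.G.Adj p r) →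
      ∃ m, I.G.Adj p m ∧ ∀ r, I.G.Adj p r → I.rank p m ≤ I.rank p r := by
    intro p ⟨r, hr⟩
    have hne : (I.G.neighborFinset p).Nonempty := ⟨r, by simpa using hr⟩
    obtain ⟨m, hm, hmin⟩ := Finset.exists_min_image (I.G.neighborFinset p) (I.rank p) hne
    exact ⟨m, by simpa using hm, fun r hr => hmin r (by simpa using hr)⟩
  set fav : P → P := fun p => if h : ∃ r, I.G.Adj p r then (hfav p h).choose else p with hfavdef
  -- the chain
  let u : ℕ → P := fun n => fav^[n] x0
  have hu : ∀ n, u (n + 1) = fav (u n) := by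
    intro n
    simp only [u, Function.iterate_succ_apply']
  -- adjacency and minimality along the chain
  have key : ∀ n, I.G.Adj (u n) (u (n + 1)) ∧
      ∀ r, I.G.Adj (u n) r → I.rank (u n) (u (n + 1)) ≤ I.rank (u n) r := by
    intro n
    induction n with
    | zero =>
        have hex : ∃ r, I.G.Adj (u 0) r := ⟨y0, h0⟩
        rw [hu 0, hfavdef]
        simp only [dif_pos hex]
        exact ⟨(hfav (u 0) hex).choose_spec.1, (hfav (u 0) hex).choose_spec.2⟩
    | succ n ihn =>
        have hex : ∃ r, I.G.Adj (u (n + 1)) r := ⟨u n, ihn.1.symm⟩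
        rw [hu (n + 1), hfavdef]
        simp only [dif_pos hex]
        exact ⟨(hfav (u (n + 1)) hex).choose_spec.1, (hfav (u (n + 1)) hex).choose_spec.2⟩
  have hcongr : ∀ a b, u a = u b → u (a + 1) = u (b + 1) := by
    intro a b h; rw [hu, hu, h]
  -- find the first repetition
  have hrep : ∃ n, ∃ m < n, u m = u n := by
    obtain ⟨a, b, hab, he⟩ := Finite.exists_ne_map_eq_of_infinite u
    rcases hab.lt_or_gt with h | h
    · exact ⟨b, a, h, he⟩
    · exact ⟨a, b, h, he.symm⟩
  classical
  set n := Nat.find hrep with hn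
  obtain ⟨m, hmn, hum⟩ := Nat.find_spec hrep
  have huinj : ∀ a b, a < b → b < n → u a ≠ u b := by
    intro a b hab hbn he
    exact Nat.find_min hrep hbn ⟨a, hab, he⟩
  set L := n - m with hL
  have hL1 : 1 ≤ L := by omega
  have hnml : n = m + L := by omega
  -- periodicity
  have per : ∀ d, u (m + d + L) = u (m + d) := by
    intro d
    induction d with
    | zero => simpa [← hnml] using hum.symm
    | succ d ihd =>
        have h' : m + (d + 1) + L = (m + d + L) + 1 := by omega
        rw [h', hu, ihd, ← hu]
        exact congrArg u (by omega)
  -- L = 1 impossible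
  have hL1' : L ≠ 1 := by
    intro h
    have : u m = u (m + 1) := by
      have := per 0
      simp only [Nat.add_zero, h] at this
      exact this.symm
    exact (key m).1.ne (by rw [← this])
  -- L = 2 : loving pair
  rcases eq_or_lt_of_le hL1 with h1 | hL2
  · exact absurd h1.symm hL1'
  rcases eq_or_lt_of_le (show 2 ≤ L from Nat.succ_le_of_lt hL2) with h2 | hL3
  · -- L = 2
    have hmm : u (m + 2) = u m := by
      have := per 0
      rw [Nat.add_zero, ← h2] at this
      exact this
    refine ⟨u m, u (m + 1), (key m).1, (key m).2, ?_⟩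
    intro r hr
    have := (key (m + 1)).2 r hr
    rwa [hmm] at this
  -- L ≥ 3 : contradiction with acyclicity
  exfalso
  have hLpos : 0 < L := by omega
  haveI : NeZero L := ⟨by omega⟩
  set f : ZMod L → P := fun i => u (m + i.val) with hf
  -- key periodic successor identity
  have hsucc : ∀ i : ZMod L, f (i + 1) = u (m + i.val + 1) := by
    intro i
    have hval : i.val < L := ZMod.val_lt i
    have h1v : (1 : ZMod L).val = 1 := by
      rw [ZMod.val_one_eq_one_mod]
      exact Nat.mod_eq_of_lt (by omega)
    have : (i + 1).val = (i.val + 1) % L := by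
      rw [ZMod.val_add, h1v]
    rcases eq_or_lt_of_le (Nat.succ_le_of_lt hval) with he | hlt
    · -- wraparound : i.val + 1 = L
      have heL : i.val + 1 = L := he
      rw [hf]
      simp only
      rw [this, heL, Nat.mod_self, Nat.add_zero]
      have hp : u (m + L) = u m := by simpa using per 0
      rw [show m + i.val + 1 = m + L by omega, hp]
    · rw [hf]
      simp only
      rw [this, Nat.mod_eq_of_lt hlt]
      exact congrArg u (by omega)
  have hprev : ∀ i : ZMod L, f i = u (m + (i - 1).val + 1) := by
    intro i
    have := hsucc (i - 1)
    rwa [sub_add_cancel] at this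
  have finj : Function.Injective f := by
    intro i j hij
    by_contra hne
    have hvne : i.val ≠ j.val := fun h => hne (ZMod.val_injective L h)
    rcases hvne.lt_or_gt with h | h
    · exact huinj (m + i.val) (m + j.val) (by omega) (by have := ZMod.val_lt j; omega) hij
    · exact huinj (m + j.val) (m + i.val) (by omega) (by have := ZMod.val_lt i; omega) hij.symm
  refine hI ⟨L, f, by omega, finj, ?_⟩
  intro i
  set a := m + (i - 1).val with ha
  have hfi : f i = u (a + 1) := hprev i
  have hfi1 : f (i + 1) = u (a + 2) := by
    rw [hsucc i]
    have : u (m + i.val + 1) = u (a + 1 + 1) := by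
      have h1 : u (m + i.val) = u (a + 1) := hfi
      exact hcongr _ _ h1
    rw [this]
  have hfim : f (i - 1) = u a := rfl
  have hne2 : f (i + 1) ≠ f (i - 1) := by
    intro h
    have : i + 1 = i - 1 := finj h
    have h2 : ((2 : ℕ) : ZMod L) = 0 := by
      calc ((2 : ℕ) : ZMod L) = (i + 1) - (i - 1) := by push_cast; ring
        _ = 0 := by rw [this, sub_self]
    have hdvd : L ∣ 2 := (ZMod.natCast_eq_zero_iff 2 L).mp h2
    have := Nat.le_of_dvd (by norm_num) hdvd
    omega
  have hadj1 : I.G.Adj (f i) (f (i + 1)) := by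
    rw [hfi, hfi1]
    exact (key (a + 1)).1
  have hadj2 : I.G.Adj (f i) (f (i - 1)) := by
    rw [hfi, hfim]
    exact ((key a).1).symm
  have hle : I.rank (f i) (f (i + 1)) ≤ I.rank (f i) (f (i - 1)) := by
    rw [hfi, hfi1, hfim]
    exact (key (a + 1)).2 (u a) ((key a).1.symm)
  refine ⟨hadj1, hadj2, lt_of_le_of_ne hle ?_⟩
  intro heq
  exact hne2 (I.rank_injOn (f i) hadj1 hadj2 heq)

end Loving
section Instances

variable {P : Type*} [Fintype P] [DecidableEq P] (I : PrefInstance P)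

/-- Delete an edge from the acceptance graph. -/
def delEdge (e : Sym2 P) : PrefInstance P where
  G := I.G.deleteEdges {e}
  b := I.b
  rank := I.rank
  rank_injOn := fun p => (I.rank_injOn p).mono
    (fun z hz => (SimpleGraph.deleteEdges_adj.mp hz).1)

@[simp] lemma delEdge_adj (e : Sym2 P) (a b : P) :
    (I.delEdge e).G.Adj a b ↔ I.G.Adj a b ∧ s(a, b) ≠ e := by
  simp [delEdge, SimpleGraph.deleteEdges_adj]

@[simp] lemma delEdge_b (e : Sym2 P) : (I.delEdge e).b = I.b := rfl
@[simp] lemma delEdge_rank (e : Sym2 P) : (I.delEdge e).rank = I.rank := rfl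

/-- Remove a loving pair: delete its edge and decrease both quotas. -/
def reduce (p q : P) : PrefInstance P where
  G := I.G.deleteEdges {s(p, q)}
  b := fun x => if x = p ∨ x = q then I.b x - 1 else I.b x
  rank := I.rank
  rank_injOn := fun r => (I.rank_injOn r).mono
    (fun z hz => (SimpleGraph.deleteEdges_adj.mp hz).1)

@[simp] lemma reduce_adj (p q a b : P) :
    (I.reduce p q).G.Adj a b ↔ I.G.Adj a b ∧ s(a, b) ≠ s(p, q) := by
  simp [reduce, SimpleGraph.deleteEdges_adj]

lemma reduce_b (p q x : P) :
    (I.reduce p q).b x = if x = p ∨ x = q then I.b x - 1 else I.b x := rfl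

@[simp] lemma reduce_rank (p q : P) : (I.reduce p q).rank = I.rank := rfl

lemma reduce_b_p (p q : P) : (I.reduce p q).b p = I.b p - 1 := by
  simp [reduce_b]

lemma reduce_b_q (p q : P) : (I.reduce p q).b q = I.b q - 1 := by
  simp [reduce_b]

lemma reduce_b_other {p q z : P} (hp : z ≠ p) (hq : z ≠ q) :
    (I.reduce p q).b z = I.b z := by
  simp [reduce_b, hp, hq]

lemma acyclic_delEdge (hI : I.Acyclic) (e : Sym2 P) : (I.delEdge e).Acyclic := by
  rintro ⟨k, f, hk, hf, hpref⟩
  refine hI ⟨k, f, hk, hf, fun i => ?_⟩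
  obtain ⟨h1, h2, h3⟩ := hpref i
  exact ⟨((I.delEdge_adj e _ _).mp h1).1, ((I.delEdge_adj e _ _).mp h2).1, h3⟩

lemma acyclic_reduce (hI : I.Acyclic) (p q : P) : (I.reduce p q).Acyclic := by
  rintro ⟨k, f, hk, hf, hpref⟩
  refine hI ⟨k, f, hk, hf, fun i => ?_⟩
  obtain ⟨h1, h2, h3⟩ := hpref i
  exact ⟨((I.reduce_adj p q _ _).mp h1).1, ((I.reduce_adj p q _ _).mp h2).1, h3⟩

lemma sum_reduce {p q : P} (hpq : p ≠ q) (hbp : 1 ≤ I.b p) (hbq : 1 ≤ I.b q) :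
    (∑ x : P, (I.reduce p q).b x) + 2 = ∑ x : P, I.b x := by
  classical
  have h1 : ∀ x : P, I.b x = (I.reduce p q).b x + (if x = p ∨ x = q then 1 else 0) := by
    intro x
    rw [reduce_b]
    by_cases h : x = p ∨ x = q
    · rw [if_pos h, if_pos h]
      rcases h with rfl | rfl <;> omega
    · rw [if_neg h, if_neg h]
      omega
  have h2 : ∑ x : P, I.b x
      = (∑ x : P, (I.reduce p q).b x) + ∑ x : P, (if x = p ∨ x = q then 1 else 0) := by
    rw [← Finset.sum_add_distrib]
    exact Finset.sum_congr rfl (fun x _ => h1 x)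
  have h3 : (∑ x : P, (if x = p ∨ x = q then 1 else 0)) = 2 := by
    have hc : ∀ x : P, (if x = p ∨ x = q then (1 : ℕ) else 0)
        = if x ∈ ({p, q} : Finset P) then 1 else 0 := by
      intro x; simp [Finset.mem_insert]
    rw [Finset.sum_congr rfl (fun x _ => hc x), Finset.sum_ite_mem, Finset.univ_inter,
      Finset.sum_const]
    rw [Finset.card_insert_of_notMem (by simpa using hpq), Finset.card_singleton]
    rfl
  omega

lemma edgeSet_ncard_delete (e : Sym2 P) (he : e ∈ I.G.edgeSet) :
    (I.G.deleteEdges {e}).edgeSet.ncard + 1 = I.G.edgeSet.ncard := by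
  rw [SimpleGraph.edgeSet_deleteEdges]
  have hfin : I.G.edgeSet.Finite := Set.toFinite _
  rw [Set.ncard_diff_singleton_of_mem he]
  have : 1 ≤ I.G.edgeSet.ncard := by
    rw [Nat.one_le_iff_ne_zero, Ne, Set.ncard_eq_zero hfin]
    exact fun h => by simp [h] at he
  omega

end Instances
section Transfer

variable {P : Type*} [Fintype P] [DecidableEq P] (I : PrefInstance P)

lemma loving_blockingPair {p q : P} (hL : I.LovingPair p q) (hbp : 1 ≤ I.b p)
    (hbq : 1 ≤ I.b q) {C : Finset (Sym2 P)} (hC : I.IsConfig C) (hs : s(p, q) ∉ C) :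
    I.BlockingPair C p q := by
  obtain ⟨hadj, hbestp, hbestq⟩ := hL
  have hwill : ∀ a m : P, I.G.Adj a m → (∀ r, I.G.Adj a r → I.rank a m ≤ I.rank a r) →
      1 ≤ I.b a → s(a, m) ∉ C → I.Willing C a m := by
    intro a m ham hbest hba hsm
    by_cases hum : (mates C a).card < I.b a
    · exact Or.inl hum
    · have hne : (mates C a).Nonempty := by
        rw [← Finset.card_pos]; omega
      obtain ⟨w, hw⟩ := hne
      have hwadj : I.G.Adj a w := I.adj_of_mem_mates hC hw
      have hle : I.rank a m ≤ I.rank a w := hbest w hwadj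
      have hne' : m ≠ w := by
        rintro rfl
        exact hsm (mem_mates.mp hw)
      have hlt : I.rank a m < I.rank a w := by
        rcases lt_or_eq_of_le hle with h | h
        · exact h
        · exact absurd (I.rank_injOn a ham hwadj h) hne'
      exact Or.inr ⟨w, hw, hlt⟩
  refine ⟨hadj, hs, hwill p q hadj hbestp hbp hs, hwill q p hadj.symm hbestq hbq ?_⟩
  rwa [Sym2.eq_swap]

lemma stable_mem_loving {p q : P} (hL : I.LovingPair p q) (hbp : 1 ≤ I.b p)
    (hbq : 1 ≤ I.b q) {D : Finset (Sym2 P)} (hD : I.IsStable D) : s(p, q) ∈ D := by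
  by_contra hs
  exact hD.2 p q (I.loving_blockingPair hL hbp hbq hD.1 hs)

/-- Transfer of willingness from the reduced instance to the original one,
at a special vertex `z` whose loving partner is `m`. -/
lemma willing_special_fwd {J : PrefInstance P} {D D1 : Finset (Sym2 P)} {z m : P}
    (hrk : J.rank = I.rank) (hbz : 1 ≤ I.b z) (hb : J.b z = I.b z - 1)
    (hM : mates D1 z = (mates D z).erase m) (hm : m ∈ mates D z) {y : P}
    (hw : J.Willing D1 z y) : I.Willing D z y := by
  have hc1 : 1 ≤ (mates D z).card := Finset.card_pos.mpr ⟨m, hm⟩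
  have hcard : (mates D1 z).card = (mates D z).card - 1 := by
    rw [hM, Finset.card_erase_of_mem hm]
  rcases hw with hum | ⟨w, hw', hr⟩
  · rw [UnderMated, hcard, hb] at hum
    refine Or.inl ?_
    show (mates D z).card < I.b z
    omega
  · refine Or.inr ⟨w, ?_, ?_⟩
    · rw [hM] at hw'
      exact Finset.mem_of_mem_erase hw'
    · rwa [hrk] at hr

/-- Transfer of willingness from the original instance to the reduced one. -/
lemma willing_special_bwd {J : PrefInstance P} {D D1 : Finset (Sym2 P)} {z m : P}
    (hrk : J.rank = I.rank) (hbz : 1 ≤ I.b z) (hb : J.b z = I.b z - 1)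
    (hM : mates D1 z = (mates D z).erase m) (hm : m ∈ mates D z) {y : P}
    (hbesty : I.rank z m ≤ I.rank z y)
    (hw : I.Willing D z y) : J.Willing D1 z y := by
  have hc1 : 1 ≤ (mates D z).card := Finset.card_pos.mpr ⟨m, hm⟩
  have hcard : (mates D1 z).card = (mates D z).card - 1 := by
    rw [hM, Finset.card_erase_of_mem hm]
  rcases hw with hum | ⟨w, hw', hr⟩
  · rw [UnderMated] at hum
    refine Or.inl ?_
    show (mates D1 z).card < J.b z
    rw [hcard, hb]
    omega
  · have hwm : w ≠ m := by
      rintro rfl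
      exact absurd hbesty (not_le.mpr hr)
    refine Or.inr ⟨w, ?_, ?_⟩
    · rw [hM]
      exact Finset.mem_erase.mpr ⟨hwm, hw'⟩
    · rwa [hrk]

lemma willing_congr {J : PrefInstance P} {D D1 : Finset (Sym2 P)} {z : P}
    (hrk : J.rank = I.rank) (hb : J.b z = I.b z) (hM : mates D1 z = mates D z) (y : P) :
    (J.Willing D1 z y ↔ I.Willing D z y) := by
  unfold Willing UnderMated
  rw [hrk, hb, hM]

lemma dropEdges_congr {J : PrefInstance P} {D D1 : Finset (Sym2 P)} {z : P}
    (hrk : J.rank = I.rank) (hb : J.b z = I.b z) (hM : mates D1 z = mates D z) :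
    J.dropEdges D1 z = I.dropEdges D z := by
  unfold dropEdges
  rw [hrk, hb, hM]

/-- Equality of drop edges at a special vertex `z` with loving partner `m`. -/
lemma dropEdges_special {J : PrefInstance P} {D D1 : Finset (Sym2 P)} {z m : P}
    (hrk : J.rank = I.rank) (hbz : 1 ≤ I.b z) (hb : J.b z = I.b z - 1)
    (hM : mates D1 z = (mates D z).erase m) (hm : m ∈ mates D z) (hzm : z ≠ m)
    (hbest : ∀ r ∈ mates D z, r ≠ m → I.rank z m < I.rank z r)
    (hne1 : ¬ ((mates D1 z).card < J.b z) → (mates D1 z).Nonempty) :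
    J.dropEdges D1 z = I.dropEdges D z ∧ s(z, m) ∉ I.dropEdges D z ∧
      s(m, z) ∉ I.dropEdges D z := by
  have hc1 : 1 ≤ (mates D z).card := Finset.card_pos.mpr ⟨m, hm⟩
  have hcard : (mates D1 z).card = (mates D z).card - 1 := by
    rw [hM, Finset.card_erase_of_mem hm]
  unfold dropEdges
  by_cases hum : (mates D z).card < I.b z
  · rw [if_pos (by rw [hcard, hb]; omega), if_pos hum]
    simp
  · rw [if_neg (by rw [hcard, hb]; omega), if_neg hum]
    obtain ⟨w1, hw1⟩ := hne1 (by rw [hcard, hb]; omega)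
    have hw1' : w1 ∈ mates D z := by
      rw [hM] at hw1; exact Finset.mem_of_mem_erase hw1
    have hw1m : w1 ≠ m := by
      rw [hM] at hw1; exact (Finset.mem_erase.mp hw1).1
    -- m is not a maximal-rank mate
    have hqnot : m ∉ (mates D z).filter (fun w => ∀ r ∈ mates D z, I.rank z r ≤ I.rank z w) := by
      rw [Finset.mem_filter]
      rintro ⟨-, hmax⟩
      exact absurd (hmax w1 hw1') (not_le.mpr (hbest w1 hw1' hw1m))
    have hfilter : (mates D1 z).filter (fun w => ∀ r ∈ mates D1 z, J.rank z r ≤ J.rank z w)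
        = (mates D z).filter (fun w => ∀ r ∈ mates D z, I.rank z r ≤ I.rank z w) := by
      ext w
      simp only [Finset.mem_filter, hM, Finset.mem_erase, hrk]
      constructor
      · rintro ⟨⟨hwm, hwD⟩, hmax⟩
        refine ⟨hwD, fun r hr => ?_⟩
        by_cases hrm : r = m
        · subst hrm
          exact le_of_lt (hbest w hwD hwm)
        · exact hmax r ⟨hrm, hr⟩
      · rintro ⟨hwD, hmax⟩
        have hwm : w ≠ m := by
          rintro rfl
          exact hqnot (Finset.mem_filter.mpr ⟨hwD, hmax⟩)
        exact ⟨⟨hwm, hwD⟩, fun r hr => hmax r hr.2⟩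
    have hnm : ∀ e ∈ (mates D z).filter
        (fun w => ∀ r ∈ mates D z, I.rank z r ≤ I.rank z w) |>.image (fun w => s(z, w)),
        e ≠ s(z, m) ∧ e ≠ s(m, z) := by
      intro e he
      rw [Finset.mem_image] at he
      obtain ⟨w, hw, rfl⟩ := he
      have hwm : w ≠ m := by
        rintro rfl
        exact hqnot hw
      constructor
      · intro heq
        rcases Sym2.eq_iff.mp heq with ⟨-, h⟩ | ⟨h, -⟩
        · exact hwm h
        · exact hzm h
      · intro heq
        rcases Sym2.eq_iff.mp heq with ⟨h, -⟩ | ⟨-, h⟩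
        · exact hzm h
        · exact hwm h
    refine ⟨by rw [hfilter], fun h => (hnm _ h).1 rfl, fun h => (hnm _ h).2 rfl⟩

end Transfer
section Lift

variable {P : Type*} [Fintype P] [DecidableEq P] (I : PrefInstance P)

lemma reduce_lift {p q : P} (hL : I.LovingPair p q) (hbp : 1 ≤ I.b p) (hbq : 1 ≤ I.b q)
    (REC : ∀ C : Finset (Sym2 P), (I.reduce p q).IsConfig C →
      ∃ (k : ℕ) (f : ℕ → Finset (Sym2 P)), k ≤ (∑ x : P, (I.reduce p q).b x) / 2 ∧ f 0 = C ∧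
        (∀ i < k, (I.reduce p q).ActiveStep (f i) (f (i + 1))) ∧
        (I.reduce p q).IsStable (f k) ∧
        ∀ D : Finset (Sym2 P), (I.reduce p q).IsStable D → D = f k)
    (C : Finset (Sym2 P)) (hC : I.IsConfig C) (hsC : s(p, q) ∈ C) :
    ∃ (k : ℕ) (f : ℕ → Finset (Sym2 P)), k ≤ ((∑ x : P, I.b x) - 2) / 2 ∧ f 0 = C ∧
      (∀ i < k, I.ActiveStep (f i) (f (i + 1))) ∧ I.IsStable (f k) ∧
      ∀ D : Finset (Sym2 P), I.IsStable D → D = f k := by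
  obtain ⟨hadj, hbestp, hbestq⟩ := hL
  have hpq : p ≠ q := hadj.ne
  set I1 := I.reduce p q with hI1
  have hrk : I1.rank = I.rank := rfl
  have hbP : I1.b p = I.b p - 1 := I.reduce_b_p p q
  have hbQ : I1.b q = I.b q - 1 := I.reduce_b_q p q
  have hbO : ∀ z, z ≠ p → z ≠ q → I1.b z = I.b z := fun z h1 h2 => I.reduce_b_other h1 h2
  -- mates facts
  have hmem_q : ∀ D : Finset (Sym2 P), s(p, q) ∈ D → q ∈ mates D p :=
    fun D h => mem_mates.mpr h
  have hmem_p : ∀ D : Finset (Sym2 P), s(p, q) ∈ D → p ∈ mates D q :=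
    fun D h => mem_mates.mpr (by rwa [Sym2.eq_swap])
  have hMp : ∀ D : Finset (Sym2 P), mates (D.erase s(p, q)) p = (mates D p).erase q :=
    fun D => mates_erase_self D hpq
  have hMq : ∀ D : Finset (Sym2 P), mates (D.erase s(p, q)) q = (mates D q).erase p := by
    intro D
    rw [Sym2.eq_swap]
    exact mates_erase_self D (Ne.symm hpq)
  have hMo : ∀ (D : Finset (Sym2 P)) z, z ≠ p → z ≠ q →
      mates (D.erase s(p, q)) z = mates D z :=
    fun D z h1 h2 => mates_erase_other D h1 h2
  have hIMp : ∀ E : Finset (Sym2 P), s(p, q) ∉ E →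
      mates E p = (mates (insert s(p, q) E) p).erase q := by
    intro E hE
    rw [mates_insert_self E hpq, Finset.erase_insert]
    intro h
    exact hE (mem_mates.mp h)
  have hIMq : ∀ E : Finset (Sym2 P), s(p, q) ∉ E →
      mates E q = (mates (insert s(p, q) E) q).erase p := by
    intro E hE
    rw [Sym2.eq_swap, mates_insert_self E (Ne.symm hpq), Finset.erase_insert]
    intro h
    rw [Sym2.eq_swap] at hE
    exact hE (mem_mates.mp h)
  have hIMo : ∀ (E : Finset (Sym2 P)) z, z ≠ p → z ≠ q →
      mates (insert s(p, q) E) z = mates E z :=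
    fun E z h1 h2 => mates_insert_other E h1 h2
  -- strict bests
  have hstrictp : ∀ D : Finset (Sym2 P), I.IsConfig D →
      ∀ r ∈ mates D p, r ≠ q → I.rank p q < I.rank p r := by
    intro D hD r hr hrq
    have hadjr : I.G.Adj p r := I.adj_of_mem_mates hD hr
    rcases lt_or_eq_of_le (hbestp r hadjr) with h | h
    · exact h
    · exact absurd (I.rank_injOn p hadj hadjr h).symm hrq
  have hstrictq : ∀ D : Finset (Sym2 P), I.IsConfig D →
      ∀ r ∈ mates D q, r ≠ p → I.rank q p < I.rank q r := by
    intro D hD r hr hrp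
    have hadjr : I.G.Adj q r := I.adj_of_mem_mates hD hr
    rcases lt_or_eq_of_le (hbestq r hadjr) with h | h
    · exact h
    · exact absurd (I.rank_injOn q hadj.symm hadjr h).symm hrp
  -- config transfers
  have cfg_erase : ∀ D : Finset (Sym2 P), I.IsConfig D → s(p, q) ∈ D →
      I1.IsConfig (D.erase s(p, q)) := by
    intro D hD hs
    constructor
    · intro e he
      obtain ⟨hne, heD⟩ := Finset.mem_erase.mp he
      show e ∈ (I.G.deleteEdges {s(p, q)}).edgeSet
      rw [SimpleGraph.edgeSet_deleteEdges]
      exact ⟨hD.1 e heD, by simpa using hne⟩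
    · intro z
      by_cases hzp : z = p
      · subst hzp
        rw [hMp D, hbP, Finset.card_erase_of_mem (hmem_q D hs)]
        have := hD.2 z
        omega
      by_cases hzq : z = q
      · subst hzq
        rw [hMq D, hbQ, Finset.card_erase_of_mem (hmem_p D hs)]
        have := hD.2 z
        omega
      · rw [hMo D z hzp hzq, hbO z hzp hzq]
        exact hD.2 z
  have cfg_insert : ∀ E : Finset (Sym2 P), I1.IsConfig E →
      s(p, q) ∉ E ∧ I.IsConfig (insert s(p, q) E) := by
    intro E hE
    have hsE : s(p, q) ∉ E := by
      intro h
      have := hE.1 _ h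
      rw [show I1.G = I.G.deleteEdges {s(p, q)} from rfl,
        SimpleGraph.edgeSet_deleteEdges] at this
      simp at this
    refine ⟨hsE, ?_, ?_⟩
    · intro e he
      rcases Finset.mem_insert.mp he with rfl | he
      · exact hadj
      · have := hE.1 e he
        rw [show I1.G = I.G.deleteEdges {s(p, q)} from rfl,
          SimpleGraph.edgeSet_deleteEdges] at this
        exact this.1
    · intro z
      by_cases hzp : z = p
      · subst hzp
        rw [mates_insert_self E hpq]
        have h1 := hE.2 z
        rw [hbP] at h1
        calc (insert q (mates E z)).card ≤ (mates E z).card + 1 := Finset.card_insert_le _ _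
          _ ≤ I.b z := by omega
      by_cases hzq : z = q
      · subst hzq
        rw [Sym2.eq_swap, mates_insert_self E (Ne.symm hpq)]
        have h1 := hE.2 z
        rw [hbQ] at h1
        calc (insert p (mates E z)).card ≤ (mates E z).card + 1 := Finset.card_insert_le _ _
          _ ≤ I.b z := by omega
      · rw [hIMo E z hzp hzq]
        have h1 := hE.2 z
        rwa [hbO z hzp hzq] at h1
  -- willingness transfers
  have hwill_fwd : ∀ E : Finset (Sym2 P), s(p, q) ∉ E → ∀ x y : P,
      I1.Willing E x y → I.Willing (insert s(p, q) E) x y := by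
    intro E hsE x y hw
    by_cases hxp : x = p
    · subst hxp
      exact I.willing_special_fwd hrk hbp hbP (hIMp E hsE)
        (hmem_q _ (Finset.mem_insert_self _ _)) hw
    by_cases hxq : x = q
    · subst hxq
      exact I.willing_special_fwd hrk hbq hbQ (hIMq E hsE)
        (hmem_p _ (Finset.mem_insert_self _ _)) hw
    · exact (I.willing_congr hrk (hbO x hxp hxq) (hIMo E x hxp hxq).symm y).mp hw
  have hwill_bwd : ∀ D : Finset (Sym2 P), s(p, q) ∈ D → ∀ x y : P, I.G.Adj x y →
      I.Willing D x y → I1.Willing (D.erase s(p, q)) x y := by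
    intro D hs x y hadjxy hw
    by_cases hxp : x = p
    · subst hxp
      exact I.willing_special_bwd hrk hbp hbP (hMp D) (hmem_q D hs) (hbestp y hadjxy) hw
    by_cases hxq : x = q
    · subst hxq
      exact I.willing_special_bwd hrk hbq hbQ (hMq D) (hmem_p D hs) (hbestq y hadjxy) hw
    · exact (I.willing_congr hrk (hbO x hxp hxq) (hMo D x hxp hxq) y).mpr hw
  -- blocking pair transfers
  have block_fwd : ∀ E : Finset (Sym2 P), s(p, q) ∉ E → ∀ x y : P,
      I1.BlockingPair E x y → I.BlockingPair (insert s(p, q) E) x y := by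
    intro E hsE x y ⟨hadj1, hnm, hwx, hwy⟩
    obtain ⟨hadjxy, hxys⟩ := (I.reduce_adj p q x y).mp hadj1
    refine ⟨hadjxy, ?_, hwill_fwd E hsE x y hwx, ?_⟩
    · intro h
      rcases Finset.mem_insert.mp h with h | h
      · exact hxys h
      · exact hnm h
    · have := hwill_fwd E hsE y x hwy
      exact this
  have block_bwd : ∀ D : Finset (Sym2 P), s(p, q) ∈ D → ∀ x y : P,
      I.BlockingPair D x y → I1.BlockingPair (D.erase s(p, q)) x y := by
    intro D hs x y ⟨hadjxy, hnm, hwx, hwy⟩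
    have hxys : s(x, y) ≠ s(p, q) := fun h => hnm (h ▸ hs)
    refine ⟨(I.reduce_adj p q x y).mpr ⟨hadjxy, hxys⟩, ?_,
      hwill_bwd D hs x y hadjxy hwx, hwill_bwd D hs y x hadjxy.symm hwy⟩
    intro h
    exact hnm (Finset.mem_of_mem_erase h)
  -- drop edges transfer
  have hdrop : ∀ E : Finset (Sym2 P), I1.IsConfig E → ∀ x y : P, I1.Willing E x y →
      I1.dropEdges E x = I.dropEdges (insert s(p, q) E) x ∧
        s(p, q) ∉ I.dropEdges (insert s(p, q) E) x := by
    intro E hE x y hwx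
    obtain ⟨hsE, hDcfg⟩ := cfg_insert E hE
    by_cases hxp : x = p
    · subst hxp
      have hsp := I.dropEdges_special hrk hbp hbP (hIMp E hsE)
        (hmem_q _ (Finset.mem_insert_self _ _)) hpq
        (hstrictp _ hDcfg) (by
          intro h
          rcases hwx with hum | ⟨w, hw, -⟩
          · exact absurd hum h
          · exact ⟨w, hw⟩)
      exact ⟨hsp.1, hsp.2.1⟩
    by_cases hxq : x = q
    · subst hxq
      have hsp := I.dropEdges_special hrk hbq hbQ (hIMq E hsE)
        (hmem_p _ (Finset.mem_insert_self _ _)) (Ne.symm hpq)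
        (hstrictq _ hDcfg) (by
          intro h
          rcases hwx with hum | ⟨w, hw, -⟩
          · exact absurd hum h
          · exact ⟨w, hw⟩)
      exact ⟨hsp.1, hsp.2.2⟩
    · refine ⟨I.dropEdges_congr hrk (hbO x hxp hxq) (hIMo E x hxp hxq).symm, ?_⟩
      intro h
      obtain ⟨w, -, heq, -⟩ := I.mem_dropEdges h
      rcases Sym2.eq_iff.mp heq.symm with ⟨h1, -⟩ | ⟨h1, -⟩
      · exact hxp h1
      · exact hxq h1
  -- resolve transfer
  have resolve_eq : ∀ E : Finset (Sym2 P), I1.IsConfig E → ∀ x y : P,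
      I1.BlockingPair E x y →
      I.resolve (insert s(p, q) E) x y = insert s(p, q) (I1.resolve E x y) := by
    intro E hE x y hB
    obtain ⟨hadj1, hnm, hwx, hwy⟩ := hB
    obtain ⟨hsE, hDcfg⟩ := cfg_insert E hE
    obtain ⟨hdx, hsx⟩ := hdrop E hE x y hwx
    obtain ⟨hdy, hsy⟩ := hdrop E hE y x hwy
    have hxys : s(x, y) ≠ s(p, q) := ((I.reduce_adj p q x y).mp hadj1).2
    unfold resolve
    rw [← hdx, ← hdy]
    rw [Finset.insert_sdiff_of_notMem _ (by
      intro h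
      rcases Finset.mem_union.mp h with h | h
      · exact hsx (hdx ▸ h)
      · exact hsy (hdy ▸ h))]
    rw [Finset.insert_comm]
  -- get the reduced sequence
  obtain ⟨hsE0, -⟩ := cfg_insert (C.erase s(p, q)) (cfg_erase C hC hsC)
  obtain ⟨k, f, hk, hf0, hsteps, hstab, huniq⟩ := REC (C.erase s(p, q)) (cfg_erase C hC hsC)
  have hcfgs : ∀ i ≤ k, I1.IsConfig (f i) := by
    intro i hi
    induction i with
    | zero => rw [hf0]; exact cfg_erase C hC hsC
    | succ j ihj =>
        exact I1.isConfig_of_activeStep (ihj (by omega)) (hsteps j (by omega))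
  refine ⟨k, fun i => insert s(p, q) (f i), ?_, ?_, ?_, ?_, ?_⟩
  · have h2 := I.sum_reduce hpq hbp hbq
    rw [← hI1] at h2
    have h3 : (∑ x : P, I1.b x) = ((∑ x : P, I.b x) - 2 : ℕ) := by omega
    exact h3 ▸ hk
  · show insert s(p, q) (f 0) = C
    rw [hf0, Finset.insert_erase hsC]
  · intro i hi
    obtain ⟨x, y, hB, heq⟩ := hsteps i hi
    have hEcfg := hcfgs i (by omega)
    obtain ⟨hsE, -⟩ := cfg_insert (f i) hEcfg
    refine ⟨x, y, block_fwd (f i) hsE x y hB, ?_⟩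
    show insert s(p, q) (f (i + 1)) = _
    rw [heq, resolve_eq (f i) hEcfg x y hB]
  · obtain ⟨hsE, hDcfg⟩ := cfg_insert (f k) hstab.1
    refine ⟨hDcfg, ?_⟩
    intro x y hB
    have hers : (insert s(p, q) (f k)).erase s(p, q) = f k := Finset.erase_insert hsE
    have := block_bwd (insert s(p, q) (f k)) (Finset.mem_insert_self _ _) x y hB
    rw [hers] at this
    exact hstab.2 x y this
  · intro D hD
    have hsD : s(p, q) ∈ D :=
      I.stable_mem_loving ⟨hadj, hbestp, hbestq⟩ hbp hbq hD
    have hD1 : I1.IsStable (D.erase s(p, q)) := by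
      refine ⟨cfg_erase D hD.1 hsD, ?_⟩
      intro x y hB
      have := block_fwd (D.erase s(p, q)) (Finset.notMem_erase _ _) x y hB
      rw [Finset.insert_erase hsD] at this
      exact hD.2 x y this
    have h5 := huniq (D.erase s(p, q)) hD1
    show D = insert s(p, q) (f k)
    rw [← h5, Finset.insert_erase hsD]

end Lift
end PrefInstance

variable {P : Type*} [Fintype P] [DecidableEq P]

open PrefInstance

section MainAux

variable {P : Type*} [Fintype P] [DecidableEq P]

theorem main_aux : ∀ (μ : ℕ) (I : PrefInstance P), I.Acyclic →
    (∑ p : P, I.b p) + I.G.edgeSet.ncard ≤ μ →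
    ∀ C : Finset (Sym2 P), I.IsConfig C →
    ∃ (k : ℕ) (f : ℕ → Finset (Sym2 P)), k ≤ (∑ p : P, I.b p) / 2 ∧ f 0 = C ∧
      (∀ i < k, I.ActiveStep (f i) (f (i + 1))) ∧ I.IsStable (f k) ∧
      ∀ D : Finset (Sym2 P), I.IsStable D → D = f k := by
  intro μ
  induction μ using Nat.strong_induction_on with
  | _ μ ih =>
  intro I hI hμ C hC
  by_cases hE : I.G.edgeSet = ∅
  · -- base case : no edges at all
    have hstab : ∀ D : Finset (Sym2 P), I.IsConfig D → I.IsStable D ∧ D = ∅ := by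
      intro D hD
      constructor
      · refine ⟨hD, fun a b hB => ?_⟩
        have h1 := hB.1
        rw [← SimpleGraph.mem_edgeSet, hE] at h1
        exact h1
      · ext e
        simp only [Finset.notMem_empty, iff_false]
        intro he
        have := hD.1 e he
        rw [hE] at this
        exact this
    refine ⟨0, fun _ => C, Nat.zero_le _, rfl, fun i hi => absurd hi (Nat.not_lt_zero i),
      (hstab C hC).1, ?_⟩
    intro D hD
    rw [(hstab D hD.1).2, (hstab C hC).2]
  -- there is an edge
  have hμ1 : 1 ≤ I.G.edgeSet.ncard := by
    have hfin : I.G.edgeSet.Finite := Set.toFinite _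
    rw [Nat.one_le_iff_ne_zero, Ne, Set.ncard_eq_zero hfin]
    exact hE
  by_cases hz : ∃ x y : P, I.G.Adj x y ∧ I.b x = 0
  · -- an edge with a zero-quota endpoint : delete it
    obtain ⟨x, y, hadj, hbx⟩ := hz
    set I1 := I.delEdge s(x, y) with hI1
    have hedge : s(x, y) ∈ I.G.edgeSet := hadj
    have hncard : I1.G.edgeSet.ncard + 1 = I.G.edgeSet.ncard :=
      I.edgeSet_ncard_delete s(x, y) hedge
    have hbeq : I1.b = I.b := rfl
    have hnotC : ∀ C' : Finset (Sym2 P), I.IsConfig C' → s(x, y) ∉ C' := by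
      intro C' hC' h
      have h1 : 0 < (mates C' x).card := Finset.card_pos.mpr ⟨y, mem_mates.mpr h⟩
      have h2 := hC'.2 x
      omega
    have nowill : ∀ C' : Finset (Sym2 P), I.IsConfig C' → ∀ w : P, ¬ I.Willing C' x w := by
      intro C' hC' w hw
      have h2 := hC'.2 x
      rcases hw with hum | ⟨w', hw', -⟩
      · rw [UnderMated, hbx] at hum
        omega
      · have h1 : 0 < (mates C' x).card := Finset.card_pos.mpr ⟨w', hw'⟩
        rw [hbx] at h2
        omega
    have cfg_iff : ∀ C' : Finset (Sym2 P), I.IsConfig C' ↔ I1.IsConfig C' := by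
      intro C'
      constructor
      · intro hC'
        refine ⟨fun e he => ?_, hC'.2⟩
        show e ∈ (I.G.deleteEdges {s(x, y)}).edgeSet
        rw [SimpleGraph.edgeSet_deleteEdges]
        refine ⟨hC'.1 e he, ?_⟩
        simp only [Set.mem_singleton_iff]
        intro h
        exact hnotC C' hC' (h ▸ he)
      · intro hC'
        refine ⟨fun e he => ?_, hC'.2⟩
        have := hC'.1 e he
        rw [show I1.G = I.G.deleteEdges {s(x, y)} from rfl,
          SimpleGraph.edgeSet_deleteEdges] at this
        exact this.1
    have will_iff : ∀ (C' : Finset (Sym2 P)) (a b : P),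
        I1.Willing C' a b ↔ I.Willing C' a b := fun _ _ _ => Iff.rfl
    have block_iff : ∀ C' : Finset (Sym2 P), I.IsConfig C' → ∀ a b : P,
        (I.BlockingPair C' a b ↔ I1.BlockingPair C' a b) := by
      intro C' hC' a b
      constructor
      · rintro ⟨ha, hn, hw1, hw2⟩
        have hne : s(a, b) ≠ s(x, y) := by
          intro h
          rcases Sym2.eq_iff.mp h with ⟨rfl, rfl⟩ | ⟨rfl, rfl⟩
          · exact nowill C' hC' b hw1
          · exact nowill C' hC' a hw2
        exact ⟨(I.delEdge_adj _ a b).mpr ⟨ha, hne⟩, hn, hw1, hw2⟩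
      · rintro ⟨ha, hn, hw1, hw2⟩
        exact ⟨((I.delEdge_adj _ a b).mp ha).1, hn, hw1, hw2⟩
    have res_eq : ∀ (C' : Finset (Sym2 P)) (a b : P),
        I1.resolve C' a b = I.resolve C' a b := fun _ _ _ => rfl
    obtain ⟨k, f, hk, hf0, hsteps, hstab, huniq⟩ :=
      ih (μ - 1) (by omega) I1 (I.acyclic_delEdge hI s(x, y)) (by
        show (∑ p : P, I.b p) + I1.G.edgeSet.ncard ≤ μ - 1
        omega) C ((cfg_iff C).mp hC)
    have hcfgs : ∀ i ≤ k, I1.IsConfig (f i) := by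
      intro i hi
      induction i with
      | zero => rw [hf0]; exact (cfg_iff C).mp hC
      | succ j ihj =>
          exact I1.isConfig_of_activeStep (ihj (by omega)) (hsteps j (by omega))
    refine ⟨k, f, hk, hf0, ?_, ?_, ?_⟩
    · intro i hi
      obtain ⟨a, b, hB, heq⟩ := hsteps i hi
      have hfc : I.IsConfig (f i) := (cfg_iff (f i)).mpr (hcfgs i (by omega))
      exact ⟨a, b, (block_iff (f i) hfc a b).mpr hB, by rw [heq, res_eq]⟩
    · have hfc : I.IsConfig (f k) := (cfg_iff (f k)).mpr hstab.1
      refine ⟨hfc, fun a b hB => ?_⟩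
      exact hstab.2 a b ((block_iff (f k) hfc a b).mp hB)
    · intro D hD
      refine huniq D ⟨(cfg_iff D).mp hD.1, fun a b hB => ?_⟩
      exact hD.2 a b ((block_iff D hD.1 a b).mpr hB)
  · -- all edges have positive quotas on both endpoints : use a loving pair
    push_neg at hz
    obtain ⟨x0, y0, h0⟩ : ∃ x y : P, I.G.Adj x y := by
      obtain ⟨e, he⟩ := Set.nonempty_iff_ne_empty.mpr hE
      induction e using Sym2.inductionOn with
      | hf x y => exact ⟨x, y, he⟩
    obtain ⟨p, q, hL⟩ := I.exists_lovingPair hI h0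
    have hadj : I.G.Adj p q := hL.1
    have hpq : p ≠ q := hadj.ne
    have hbp : 1 ≤ I.b p := Nat.one_le_iff_ne_zero.mpr (hz p q hadj)
    have hbq : 1 ≤ I.b q := Nat.one_le_iff_ne_zero.mpr (hz q p hadj.symm)
    have hsum := I.sum_reduce hpq hbp hbq
    have hncard : (I.reduce p q).G.edgeSet.ncard + 1 = I.G.edgeSet.ncard :=
      I.edgeSet_ncard_delete s(p, q) hadj
    have REC := ih (μ - 1) (by omega) (I.reduce p q) (I.acyclic_reduce hI p q) (by
      show (∑ x : P, (I.reduce p q).b x) + (I.reduce p q).G.edgeSet.ncard ≤ μ - 1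
      omega)
    have hdiv : ((∑ x : P, I.b x) - 2) / 2 + 1 = (∑ x : P, I.b x) / 2 := by omega
    by_cases hsC : s(p, q) ∈ C
    · obtain ⟨k, f, hk, hf0, hsteps, hstab, huniq⟩ := I.reduce_lift hL hbp hbq REC C hC hsC
      exact ⟨k, f, le_trans hk (Nat.div_le_div_right (Nat.sub_le _ _)), hf0, hsteps, hstab,
        huniq⟩
    · have hB := I.loving_blockingPair hL hbp hbq hC hsC
      have hC1 : I.IsConfig (I.resolve C p q) := I.isConfig_resolve hC hB
      have hsC1 : s(p, q) ∈ I.resolve C p q := Finset.mem_insert_self _ _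
      obtain ⟨k, f, hk, hf0, hsteps, hstab, huniq⟩ :=
        I.reduce_lift hL hbp hbq REC (I.resolve C p q) hC1 hsC1
      refine ⟨k + 1, fun i => if i = 0 then C else f (i - 1), by omega, by simp, ?_, ?_, ?_⟩
      · intro i hi
        match i with
        | 0 =>
            show I.ActiveStep C (if 1 = 0 then C else f 0)
            rw [if_neg one_ne_zero, hf0]
            exact ⟨p, q, hB, rfl⟩
        | (j + 1) =>
            show I.ActiveStep (if j + 1 = 0 then C else f j)
              (if j + 2 = 0 then C else f (j + 1))
            rw [if_neg (Nat.succ_ne_zero j), if_neg (Nat.succ_ne_zero (j + 1))]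
            exact hsteps j (by omega)
      · show I.IsStable (if k + 1 = 0 then C else f k)
        rw [if_neg (Nat.succ_ne_zero k)]
        exact hstab
      · intro D hD
        show D = if k + 1 = 0 then C else f k
        rw [if_neg (Nat.succ_ne_zero k)]
        exact huniq D hD

end MainAux

/-- For any acyclic instance and any initial configuration
`C`, there is a sequence of at most `B / 2` active initiatives leading from `C`
to the unique stable configuration, where `B` is the sum of all quotas. -/
theorem acyclic_short_sequence_to_stable (I : PrefInstance P) (hI : I.Acyclic)
    (C : Finset (Sym2 P)) (hC : I.IsConfig C) :
    ∃ (k : ℕ) (f : ℕ → Finset (Sym2 P)), k ≤ (∑ p : P, I.b p) / 2 ∧ f 0 = C ∧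
      (∀ i < k, I.ActiveStep (f i) (f (i + 1))) ∧ I.IsStable (f k) ∧
      ∀ D : Finset (Sym2 P), I.IsStable D → D = f k :=
  main_aux ((∑ p : P, I.b p) + I.G.edgeSet.ncard) I hI le_rfl C hC
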